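/- Every submetry from R^n to R^k is, up to pre- and post-composition with isometries, the standard coordinate projection (y¹,…,y^n) ↦ (y¹,…,y^k). -/

import Mathlib

open Metric Filter Function MeasureTheory
open scoped Manifold Topology
open scoped RealInnerProductSpace


/-- `π : X → Y` is a submetry: for every `x ∈ X` and every `r > 0`,
`π(B̄_r(x)) = B̄_r(π(x))` (closed balls). -/
def IsSubmetry {X Y : Type*} [MetricSpace X] [MetricSpace Y] (π : X → Y) : Prop :=
  ∀ (x : X) (r : ℝ), 0 < r → π '' Metric.closedBall x r = Metric.closedBall (π x) r

section aux
variable {X Y : Type*} [MetricSpace X] [MetricSpace Y] {f : X → Y}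

lemma IsSubmetry.lip (hf : IsSubmetry f) (a b : X) : dist (f a) (f b) ≤ dist a b := by
  rcases eq_or_lt_of_le (dist_nonneg : (0:ℝ) ≤ dist a b) with h | h
  · rw [dist_eq_zero.1 h.symm]; simp
  · have hb : b ∈ Metric.closedBall a (dist a b) := by
      simp [Metric.mem_closedBall, dist_comm]
    have : f b ∈ f '' Metric.closedBall a (dist a b) := ⟨b, hb, rfl⟩
    rw [hf a _ h] at this
    simpa [Metric.mem_closedBall, dist_comm] using this

lemma IsSubmetry.lift (hf : IsSubmetry f) (a : X) (q : Y) :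
    ∃ w, f w = q ∧ dist a w ≤ dist (f a) q := by
  rcases eq_or_lt_of_le (dist_nonneg : (0:ℝ) ≤ dist (f a) q) with h | h
  · exact ⟨a, dist_eq_zero.1 h.symm, by simp [← h]⟩
  · have hq : q ∈ Metric.closedBall (f a) (dist (f a) q) := by
      simp [Metric.mem_closedBall, dist_comm]
    rw [← hf a _ h] at hq
    obtain ⟨w, hw, hwq⟩ := hq
    exact ⟨w, hwq, by simpa [Metric.mem_closedBall, dist_comm] using hw⟩

end aux

section midpt
variable {E F : Type*} [NormedAddCommGroup E] [InnerProductSpace ℝ E]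
  [NormedAddCommGroup F] [InnerProductSpace ℝ F] {f : E → F}

lemma IsSubmetry.map_midpoint (hf : IsSubmetry f) (x y : E) :
    f (midpoint ℝ x y) = midpoint ℝ (f x) (f y) := by
  set m := midpoint ℝ x y with hm
  set p := f x
  set q := f y
  set p' := f m with hp'
  set v := p + q - (2:ℝ) • p' with hv
  suffices hv0 : v = 0 by
    have h2 : p + q = (2:ℝ) • p' := sub_eq_zero.1 hv0
    rw [midpoint_eq_smul_add, h2, smul_smul, invOf_mul_self, one_smul]
  by_contra hv0
  have hnv : 0 < ‖v‖ := norm_pos_iff.2 hv0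
  set D := dist x y ^ 2 / 2 with hD
  have hDnn : 0 ≤ D := by positivity
  set t := (D + 1) / (2 * ‖v‖) with ht
  have htpos : 0 < t := by positivity
  set u := ‖v‖⁻¹ • v with hu
  have hun : ‖u‖ = 1 := by
    rw [hu, norm_smul]
    simp [abs_of_nonneg (le_of_lt hnv), inv_mul_cancel₀ (ne_of_gt hnv)]
  set qt := p' - t • u with hqt
  have hd_pqt : dist p' qt = t := by
    rw [hqt, dist_eq_norm]
    simp [norm_smul, hun, abs_of_pos htpos]
  obtain ⟨w, hw, hdw⟩ := hf.lift m qt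
  rw [hd_pqt] at hdw
  have hdw0 : 0 ≤ dist m w := dist_nonneg
  have expand : ∀ z : F, ‖z - qt‖ ^ 2 = ‖z - p'‖ ^ 2 + 2 * t * ⟪z - p', u⟫ + t ^ 2 := by
    intro z
    have : z - qt = (z - p') + t • u := by rw [hqt]; abel
    rw [this, norm_add_sq_real, real_inner_smul_right, norm_smul]
    simp [hun, abs_of_pos htpos]
    ring
  have hinner : ⟪p - p', u⟫ + ⟪q - p', u⟫ = ‖v‖ := by
    rw [← inner_add_left]
    have : (p - p') + (q - p') = v := by rw [hv]; module
    rw [this, hu, real_inner_smul_right, real_inner_self_eq_norm_sq]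
    field_simp
  have lb : 2 * t ^ 2 + 2 * t * ‖v‖ ≤ ‖p - qt‖ ^ 2 + ‖q - qt‖ ^ 2 := by
    rw [expand p, expand q]
    nlinarith [sq_nonneg ‖p - p'‖, sq_nonneg ‖q - p'‖, hinner]
  have par : dist x w ^ 2 + dist y w ^ 2 = 2 * dist m w ^ 2 + D := by
    rw [hD]
    have hxy : x + y = (2:ℝ) • m := by
      rw [hm, two_smul]; exact (midpoint_add_self ℝ x y).symm
    have h1 : (x - w) + (y - w) = (2:ℝ) • (m - w) := by
      rw [smul_sub, ← hxy, two_smul]; abel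
    have h2 : (x - w) - (y - w) = x - y := by abel
    have hpl := parallelogram_law_with_norm ℝ (x - w) (y - w)
    rw [h1, h2, norm_smul] at hpl
    norm_num at hpl
    simp only [dist_eq_norm]
    nlinarith [hpl]
  have hxw : dist p qt ≤ dist x w := by rw [← hw]; exact hf.lip x w
  have hyw : dist q qt ≤ dist y w := by rw [← hw]; exact hf.lip y w
  have key : 2 * t * ‖v‖ ≤ D := by
    have ha : ‖p - qt‖ ^ 2 ≤ dist x w ^ 2 := by
      rw [← dist_eq_norm]; exact pow_le_pow_left₀ dist_nonneg hxw 2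
    have hb : ‖q - qt‖ ^ 2 ≤ dist y w ^ 2 := by
      rw [← dist_eq_norm]; exact pow_le_pow_left₀ dist_nonneg hyw 2
    have hmw2 : dist m w ^ 2 ≤ t ^ 2 := pow_le_pow_left₀ hdw0 hdw 2
    linarith [lb, par, ha, hb, hmw2]
  have heq : 2 * t * ‖v‖ = D + 1 := by
    rw [ht]; field_simp
  linarith

end midpt

-- adjoint of a 1-Lipschitz linear surjection with norm-controlled sections is an isometry
lemma adjoint_isom {E F : Type*} [NormedAddCommGroup E] [InnerProductSpace ℝ E]
    [NormedAddCommGroup F] [InnerProductSpace ℝ F]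
    [FiniteDimensional ℝ E] [FiniteDimensional ℝ F]
    (L : E →ₗ[ℝ] F) (hLnorm : ∀ y, ‖L y‖ ≤ ‖y‖)
    (hsurj : ∀ v, ∃ w, L w = v ∧ ‖w‖ ≤ ‖v‖) (v : F) :
    ‖LinearMap.adjoint L v‖ = ‖v‖ := by
  set J := LinearMap.adjoint L with hJ
  have hle : ‖J v‖ ≤ ‖v‖ := by
    have h1 : ‖J v‖ ^ 2 = ⟪v, L (J v)⟫ := by
      rw [← LinearMap.adjoint_inner_left, real_inner_self_eq_norm_sq]
    have h2 : ⟪v, L (J v)⟫ ≤ ‖v‖ * ‖J v‖ :=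
      le_trans (real_inner_le_norm _ _)
        (mul_le_mul_of_nonneg_left (hLnorm _) (norm_nonneg _))
    nlinarith [norm_nonneg (J v), norm_nonneg v]
  have hge : ‖v‖ ≤ ‖J v‖ := by
    obtain ⟨w, hw, hwn⟩ := hsurj v
    have h1 : ‖v‖ ^ 2 = ⟪J v, w⟫ := by
      rw [LinearMap.adjoint_inner_left, hw, real_inner_self_eq_norm_sq]
    have h2 : ⟪J v, w⟫ ≤ ‖J v‖ * ‖v‖ :=
      le_trans (real_inner_le_norm _ _)
        (mul_le_mul_of_nonneg_left hwn (norm_nonneg _))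
    nlinarith [norm_nonneg (J v), norm_nonneg v]
  exact le_antisymm hle hge

-- extend the image of the standard basis under a linear isometry to an orthonormal basis
lemma extend_basis {n k : ℕ} (hk : k ≤ n)
    (Jiso : EuclideanSpace ℝ (Fin k) →ₗᵢ[ℝ] EuclideanSpace ℝ (Fin n)) :
    ∃ b : OrthonormalBasis (Fin n) ℝ (EuclideanSpace ℝ (Fin n)),
      ∀ i : Fin k, b (Fin.castLE hk i) = Jiso (EuclideanSpace.single i 1) := by
  classical
  set V : Fin n → EuclideanSpace ℝ (Fin n) :=
    fun i => if h : (i : ℕ) < k then Jiso (EuclideanSpace.single ⟨i, h⟩ 1) else 0 with hV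
  set s : Set (Fin n) := {i : Fin n | (i : ℕ) < k} with hs
  have hVo : Orthonormal ℝ (s.restrict V) := by
    rw [orthonormal_iff_ite]
    rintro ⟨i, hi⟩ ⟨j, hj⟩
    have hi' : (i : ℕ) < k := hi
    have hj' : (j : ℕ) < k := hj
    change ⟪V i, V j⟫ = _
    simp only [Set.restrict_apply, hV, dif_pos hi', dif_pos hj']
    rw [Jiso.inner_map_map]
    have hb0 := orthonormal_iff_ite.1 (EuclideanSpace.basisFun (Fin k) ℝ).orthonormal
      ⟨i, hi'⟩ ⟨j, hj'⟩
    rw [EuclideanSpace.basisFun_apply, EuclideanSpace.basisFun_apply] at hb0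
    rw [hb0]
    simp [Fin.ext_iff, Subtype.ext_iff]
  have hcard : Module.finrank ℝ (EuclideanSpace ℝ (Fin n)) = Fintype.card (Fin n) := by
    simp [finrank_euclideanSpace_fin]
  obtain ⟨b, hb⟩ := hVo.exists_orthonormalBasis_extension_of_card_eq hcard
  refine ⟨b, fun i => ?_⟩
  have hmem : (Fin.castLE hk i) ∈ s := by
    simp [hs, Fin.coe_castLE, i.isLt]
  rw [hb _ hmem, hV]
  simp only []
  have h : ((Fin.castLE hk i : Fin n) : ℕ) < k := by simp [i.isLt]
  rw [dif_pos h]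
  congr 1

/-- **Rigidity of Euclidean submetries.**  Every submetry from `ℝⁿ` to `ℝᵏ`
is, up to pre- and post-composition with isometries, the standard coordinate
projection `(y¹, …, yⁿ) ↦ (y¹, …, yᵏ)`. -/
theorem submetry_euclidean_rigidity (n k : ℕ) (hk : k ≤ n)
    (π : EuclideanSpace ℝ (Fin n) → EuclideanSpace ℝ (Fin k))
    (hπ : IsSubmetry π) :
    ∃ (e₁ : EuclideanSpace ℝ (Fin n) ≃ᵢ EuclideanSpace ℝ (Fin n))
      (e₂ : EuclideanSpace ℝ (Fin k) ≃ᵢ EuclideanSpace ℝ (Fin k)),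
      ∀ y : EuclideanSpace ℝ (Fin n),
        π y = e₂ (WithLp.toLp 2 (fun i : Fin k => e₁ y (Fin.castLE hk i))) := by
  have hcont : Continuous π := by
    apply (LipschitzWith.of_dist_le_mul (K := 1) ?_).continuous
    intro a b
    simpa using hπ.lip a b
  obtain ⟨L, hdec⟩ : ∃ L : EuclideanSpace ℝ (Fin n) →ₗ[ℝ] EuclideanSpace ℝ (Fin k),
      ∀ y, π y = L y + π 0 := by
    refine ⟨(AffineMap.ofMapMidpoint π (fun a b => hπ.map_midpoint a b) hcont).linear, ?_⟩
    intro y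
    have h0 : ∀ z, AffineMap.ofMapMidpoint π (fun a b => hπ.map_midpoint a b) hcont z = π z :=
      fun z => rfl
    have := congrFun (AffineMap.decomp
      (AffineMap.ofMapMidpoint π (fun a b => hπ.map_midpoint a b) hcont)) y
    simp only [Pi.add_apply] at this
    rw [← h0 y, this, h0 0]
  have hLnorm : ∀ y, ‖L y‖ ≤ ‖y‖ := by
    intro y
    have h := hπ.lip y 0
    rw [dist_eq_norm, dist_eq_norm, hdec y, hdec 0, map_zero, zero_add] at h
    simpa using h
  have hsurj : ∀ v, ∃ w, L w = v ∧ ‖w‖ ≤ ‖v‖ := by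
    intro v
    obtain ⟨w, hw, hwd⟩ := hπ.lift 0 (v + π 0)
    refine ⟨w, ?_, ?_⟩
    · have h := hdec w
      rw [hw] at h
      exact (add_left_injective _ h).symm
    · rw [dist_eq_norm] at hwd
      simpa using hwd
  obtain ⟨b, hb⟩ := extend_basis hk ⟨LinearMap.adjoint L, adjoint_isom L hLnorm hsurj⟩
  refine ⟨b.repr.toIsometryEquiv, IsometryEquiv.addRight (π 0), fun y => ?_⟩
  have hrepr : WithLp.toLp 2 (fun i : Fin k => b.repr y (Fin.castLE hk i)) = L y := by
    ext i
    simp only [PiLp.toLp_apply]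
    have h1 : b.repr y (Fin.castLE hk i) = ⟪b (Fin.castLE hk i), y⟫ :=
      b.repr_apply_apply y (Fin.castLE hk i)
    rw [h1, hb i]
    show ⟪LinearMap.adjoint L (EuclideanSpace.single i 1), y⟫ = L y i
    rw [LinearMap.adjoint_inner_left, EuclideanSpace.inner_single_left]
    simp
  rw [hdec y]
  simp only [LinearIsometryEquiv.coe_toIsometryEquiv, IsometryEquiv.addRight_apply]
  rw [hrepr]
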